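/- Let φ : [0, ∞) → [0, ∞) be superadditive, monotonically increasing with φ(t) → 0 as t → 0, and suppose ‖u_j − u*‖² ≤ φ(‖F(u_j) − φ₀‖²) for all j, together with the summability ∑_{j=0}^k ‖F(u_j) − φ₀‖² ≤ S for all k and the monotonicity ‖u_k − u*‖ ≤ ‖u_j − u*‖ for j ≤ k. Then ‖u_k − u*‖² ≤ φ(S)/k for all k ≥ 1. -/
import Mathlib


open Finset Filter

lemma superadd_sum (φfun : ℝ → ℝ)
    (hnn : ∀ t, 0 ≤ t → 0 ≤ φfun t)
    (hsuper : ∀ s t : ℝ, 0 ≤ s → 0 ≤ t → φfun s + φfun t ≤ φfun (s + t))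
    (a : ℕ → ℝ) (ha : ∀ j, 0 ≤ a j) :
    ∀ n : ℕ, ∑ j ∈ range n, φfun (a j) ≤ φfun (∑ j ∈ range n, a j) := by
  intro n
  induction n with
  | zero => simpa using hnn 0 le_rfl
  | succ n ih =>
      rw [Finset.sum_range_succ, Finset.sum_range_succ]
      calc ∑ j ∈ range n, φfun (a j) + φfun (a n)
          ≤ φfun (∑ j ∈ range n, a j) + φfun (a n) := by linarith
        _ ≤ φfun (∑ j ∈ range n, a j + a n) :=
            hsuper _ _ (Finset.sum_nonneg fun j _ => ha j) (ha n)

/-- Conditional stability via a superadditive index function: the iterates of a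
Fejér monotone sequence with square-summable residuals satisfy
`‖u_k − u*‖² ≤ φ(S)/k`. -/
theorem rate_from_conditional_stability
    {X Y : Type*} [NormedAddCommGroup X] [NormedAddCommGroup Y]
    (F : X → Y) (φ₀ : Y) (ustar : X) (hsol : F ustar = φ₀)
    (φfun : ℝ → ℝ)
    (hnn : ∀ t, 0 ≤ t → 0 ≤ φfun t)
    (hsuper : ∀ s t : ℝ, 0 ≤ s → 0 ≤ t → φfun s + φfun t ≤ φfun (s + t))
    (hmono : ∀ s t : ℝ, 0 ≤ s → s ≤ t → φfun s ≤ φfun t)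
    (hlim : Tendsto φfun (nhdsWithin 0 (Set.Ioi 0)) (nhds 0))
    (S : ℝ) (hS : 0 < S)
    (u : ℕ → X)
    (hstab : ∀ j : ℕ, ‖u j - ustar‖ ^ 2 ≤ φfun (‖F (u j) - φ₀‖ ^ 2))
    (hsum : ∀ k : ℕ, ∑ j ∈ range (k + 1), ‖F (u j) - φ₀‖ ^ 2 ≤ S)
    (hanti : Antitone (fun k => ‖u k - ustar‖)) :
    ∀ k : ℕ, 1 ≤ k → ‖u k - ustar‖ ^ 2 ≤ φfun S / k := by
  intro k hk
  set a : ℕ → ℝ := fun j => ‖F (u j) - φ₀‖ ^ 2 with ha_def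
  have ha : ∀ j, 0 ≤ a j := fun j => sq_nonneg _
  have hsum_le : ∑ j ∈ range k, a j ≤ S := by
    obtain ⟨m, rfl⟩ := Nat.exists_eq_add_of_le hk
    calc ∑ j ∈ range (1 + m), a j = ∑ j ∈ range (m + 1), a j := by ring_nf
      _ ≤ S := hsum m
  have key : (k : ℝ) * ‖u k - ustar‖ ^ 2 ≤ φfun S := by
    calc (k : ℝ) * ‖u k - ustar‖ ^ 2
        = ∑ _j ∈ range k, ‖u k - ustar‖ ^ 2 := by
          rw [Finset.sum_const, Finset.card_range, nsmul_eq_mul]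
      _ ≤ ∑ j ∈ range k, φfun (a j) := by
          apply Finset.sum_le_sum
          intro j hj
          have h1 : ‖u k - ustar‖ ≤ ‖u j - ustar‖ :=
            hanti (le_of_lt (Finset.mem_range.mp hj))
          have h2 : ‖u k - ustar‖ ^ 2 ≤ ‖u j - ustar‖ ^ 2 :=
            pow_le_pow_left₀ (norm_nonneg _) h1 2
          exact h2.trans (hstab j)
      _ ≤ φfun (∑ j ∈ range k, a j) := superadd_sum φfun hnn hsuper a ha k
      _ ≤ φfun S := hmono _ _ (Finset.sum_nonneg fun j _ => ha j) hsum_le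
  have hkpos : (0 : ℝ) < k := by exact_mod_cast hk
  rw [le_div_iff₀ hkpos]
  linarith [key]
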